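/- arXiv:2512.00788 — 2 statements merged into one kernel-verified Lean document; each statement's English description precedes it below -/
import Mathlib

section
/- (Power is bounded by the commutator norm in the direct charging protocol.) Let H_B and H_C be Hermitian matrices in Matrix n n ℂ and let ψ : n → ℂ be a unit vector. For t : ℝ set ψ_t = (Matrix.exp ((-(t : ℂ) * Complex.I) • H_C)).mulVec ψ and define the stored energy E(t) = Complex.re (star ψ_t ⬝ᵥ (H_B.mulVec ψ_t)). Then E is differentiable on ℝ, and for every t the instantaneous power satisfies |deriv E t| ≤ ‖⁅H_B, H_C⁆‖. -/
open scoped Matrix.Norms.L2Operator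
open scoped Matrix

theorem inner_piLp_equiv_symm_aux {n : Type*} [Fintype n] (x y : n → ℂ) :
    (inner ℂ ((WithLp.equiv 2 (n → ℂ)).symm x) ((WithLp.equiv 2 (n → ℂ)).symm y) : ℂ)
      = star x ⬝ᵥ y := by
  rw [dotProduct_comm]; rfl

/-- In the direct charging protocol, the battery starts in the
unit state `ψ`, evolves unitarily under the charger Hamiltonian `H_C` as
`ψ_t = e^{-itH_C} ψ`, and the stored energy is
`E(t) = Re ⟨ψ_t, H_B ψ_t⟩`. Then `E` is differentiable and the instantaneous
power satisfies `|E'(t)| ≤ ‖⁅H_B, H_C⁆‖` for every `t`. -/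
theorem power_le_commutator_norm
    {n : Type*} [Fintype n] [DecidableEq n] [Nonempty n]
    (H_B H_C : Matrix n n ℂ)
    (hB : H_B.IsHermitian) (hC : H_C.IsHermitian)
    (ψ : n → ℂ) (hψ : ‖(WithLp.equiv 2 (n → ℂ)).symm ψ‖ = 1)
    (E : ℝ → ℝ)
    (hE : ∀ t : ℝ,
      E t =
        Complex.re
          (star ((NormedSpace.exp ((-(t : ℂ) * Complex.I) • H_C)).mulVec ψ) ⬝ᵥ
            (H_B.mulVec
              ((NormedSpace.exp ((-(t : ℂ) * Complex.I) • H_C)).mulVec ψ)))) :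
    Differentiable ℝ E ∧ ∀ t : ℝ, |deriv E t| ≤ ‖⁅H_B, H_C⁆‖ := by
  classical
  set A : Matrix n n ℂ := (-Complex.I) • H_C with hA
  have hsm : ∀ t : ℝ, (-(t : ℂ) * Complex.I) • H_C = (t : ℝ) • A := by
    intro t
    rw [hA, ← smul_assoc]
    congr 1
    rw [Complex.real_smul]
    ring
  set v : ℝ → n → ℂ := fun s => NormedSpace.exp (s • A) *ᵥ ψ with hv_def
  -- derivative of the state
  have hv : ∀ t : ℝ, HasDerivAt v (A *ᵥ v t) t := by
    intro t
    have hU : HasDerivAt (fun s : ℝ => NormedSpace.exp (s • A))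
        (A * NormedSpace.exp (t • A)) t := by
      exact hasDerivAt_exp_smul_const' A t
    let L : Matrix n n ℂ →ₗ[ℝ] (n → ℂ) :=
      { toFun := fun M => M *ᵥ ψ
        map_add' := fun M N => Matrix.add_mulVec M N ψ
        map_smul' := fun c M => Matrix.smul_mulVec c M ψ }
    have h := L.toContinuousLinearMap.hasFDerivAt.comp_hasDerivAt t hU
    have h2 : (A * NormedSpace.exp (t • A)) *ᵥ ψ = A *ᵥ v t := by
      rw [hv_def, Matrix.mulVec_mulVec]
    exact h2 ▸ h
  have hvi : ∀ (t : ℝ) (i : n), HasDerivAt (fun s => v s i) ((A *ᵥ v t) i) t := fun t i =>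
    (ContinuousLinearMap.proj (R := ℝ) (φ := fun _ : n => ℂ) i).hasFDerivAt.comp_hasDerivAt t
      (hv t)
  have hconj : ∀ (t : ℝ) (i : n),
      HasDerivAt (fun s => (starRingEnd ℂ) (v s i)) ((starRingEnd ℂ) ((A *ᵥ v t) i)) t := by
    intro t i
    exact Complex.conjCLE.toContinuousLinearMap.hasFDerivAt.comp_hasDerivAt t (hvi t i)
  have hw : ∀ (t : ℝ) (i : n),
      HasDerivAt (fun s => (H_B *ᵥ v s) i) ((H_B *ᵥ (A *ᵥ v t)) i) t := by
    intro t i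
    let W : (n → ℂ) →ₗ[ℝ] ℂ := ((LinearMap.proj i).comp H_B.mulVecLin).restrictScalars ℝ
    exact W.toContinuousLinearMap.hasFDerivAt.comp_hasDerivAt t (hv t)
  -- commutator identity
  have key : ∀ u : n → ℂ,
      star (A *ᵥ u) ⬝ᵥ (H_B *ᵥ u) + star u ⬝ᵥ (H_B *ᵥ (A *ᵥ u))
        = -Complex.I * (star u ⬝ᵥ (⁅H_B, H_C⁆ *ᵥ u)) := by
    intro u
    have hAH : Aᴴ = Complex.I • H_C := by
      rw [hA, Matrix.conjTranspose_smul, hC.eq]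
      congr 1
      simp
    have hM : Aᴴ * H_B + H_B * A = (-Complex.I) • ⁅H_B, H_C⁆ := by
      rw [hAH, hA, Ring.lie_def, smul_mul_assoc, mul_smul_comm]
      module
    rw [Matrix.star_mulVec, ← Matrix.dotProduct_mulVec, Matrix.mulVec_mulVec,
      Matrix.mulVec_mulVec, ← dotProduct_add, ← Matrix.add_mulVec, hM,
      Matrix.smul_mulVec, dotProduct_smul, smul_eq_mul]
  -- derivative of f
  set f : ℝ → ℂ := fun s => star (v s) ⬝ᵥ (H_B *ᵥ v s) with hf_def
  have hf : ∀ t : ℝ,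
      HasDerivAt f (-Complex.I * (star (v t) ⬝ᵥ (⁅H_B, H_C⁆ *ᵥ v t))) t := by
    intro t
    have hfe : f = fun s => ∑ i, (starRingEnd ℂ) (v s i) * (H_B *ᵥ v s) i := by
      funext s
      simp [hf_def, dotProduct, Complex.star_def]
    have hS : HasDerivAt f
        (∑ i, ((starRingEnd ℂ) ((A *ᵥ v t) i) * (H_B *ᵥ v t) i
          + (starRingEnd ℂ) (v t i) * (H_B *ᵥ (A *ᵥ v t)) i)) t := by
      rw [hfe]
      exact HasDerivAt.fun_sum fun i _ => (hconj t i).mul (hw t i)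
    have h1 : (∑ i, ((starRingEnd ℂ) ((A *ᵥ v t) i) * (H_B *ᵥ v t) i
          + (starRingEnd ℂ) (v t i) * (H_B *ᵥ (A *ᵥ v t)) i))
        = star (A *ᵥ v t) ⬝ᵥ (H_B *ᵥ v t) + star (v t) ⬝ᵥ (H_B *ᵥ (A *ᵥ v t)) := by
      simp [dotProduct, Finset.sum_add_distrib, Complex.star_def]
    rw [h1, key (v t)] at hS
    exact hS
  -- E equals re ∘ f
  have hEf : E = fun s => Complex.re (f s) := by
    funext s
    rw [hE s, hsm s]
  have hEt : ∀ t : ℝ,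
      HasDerivAt E (Complex.re (-Complex.I * (star (v t) ⬝ᵥ (⁅H_B, H_C⁆ *ᵥ v t)))) t := by
    intro t
    rw [hEf]
    exact Complex.reCLM.hasFDerivAt.comp_hasDerivAt t (hf t)
  refine ⟨fun t => (hEt t).differentiableAt, fun t => ?_⟩
  -- unitarity and norm preservation
  have hUU : (NormedSpace.exp ((t : ℝ) • A))ᴴ * NormedSpace.exp ((t : ℝ) • A) = 1 := by
    have h1 : ((t : ℝ) • A : Matrix n n ℂ)ᴴ = -((t : ℝ) • A) := by
      rw [← hsm t, Matrix.conjTranspose_smul, hC.eq, ← neg_smul]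
      congr 1
      simp
    rw [← Matrix.exp_conjTranspose, h1,
      ← Matrix.exp_add_of_commute (-((t : ℝ) • A)) ((t : ℝ) • A) ((Commute.refl ((t : ℝ) • A)).neg_left),
      neg_add_cancel, NormedSpace.exp_zero]
  have hinner : star (v t) ⬝ᵥ (v t) = star ψ ⬝ᵥ ψ := by
    rw [hv_def]
    simp only
    rw [Matrix.star_mulVec, ← Matrix.dotProduct_mulVec, Matrix.mulVec_mulVec, hUU,
      Matrix.one_mulVec]
  have hun : ‖(WithLp.equiv 2 (n → ℂ)).symm (v t)‖ = 1 := by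
    have h2 : (inner ℂ ((WithLp.equiv 2 (n → ℂ)).symm (v t))
        ((WithLp.equiv 2 (n → ℂ)).symm (v t)) : ℂ)
        = inner ℂ ((WithLp.equiv 2 (n → ℂ)).symm ψ) ((WithLp.equiv 2 (n → ℂ)).symm ψ) := by
      rw [inner_piLp_equiv_symm_aux, inner_piLp_equiv_symm_aux, hinner]
    rw [inner_self_eq_norm_sq_to_K, inner_self_eq_norm_sq_to_K, hψ] at h2
    have h4 : ‖(WithLp.equiv 2 (n → ℂ)).symm (v t)‖ ^ 2 = 1 := by
      have h3 : ((‖(WithLp.equiv 2 (n → ℂ)).symm (v t)‖ ^ 2 : ℝ) : ℂ) = ((1 : ℝ) : ℂ) := by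
        push_cast
        simpa using h2
      exact_mod_cast h3
    calc ‖(WithLp.equiv 2 (n → ℂ)).symm (v t)‖
        = Real.sqrt (‖(WithLp.equiv 2 (n → ℂ)).symm (v t)‖ ^ 2) :=
          (Real.sqrt_sq (norm_nonneg _)).symm
      _ = 1 := by rw [h4, Real.sqrt_one]
  -- main estimate
  rw [(hEt t).deriv]
  have habs : |Complex.re (-Complex.I * (star (v t) ⬝ᵥ (⁅H_B, H_C⁆ *ᵥ v t)))|
      ≤ ‖star (v t) ⬝ᵥ (⁅H_B, H_C⁆ *ᵥ v t)‖ := by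
    calc |Complex.re (-Complex.I * (star (v t) ⬝ᵥ (⁅H_B, H_C⁆ *ᵥ v t)))|
        ≤ ‖(-Complex.I * (star (v t) ⬝ᵥ (⁅H_B, H_C⁆ *ᵥ v t)))‖ :=
          Complex.abs_re_le_norm _
      _ = ‖star (v t) ⬝ᵥ (⁅H_B, H_C⁆ *ᵥ v t)‖ := by
          rw [norm_mul]
          simp
  refine habs.trans ?_
  have hz : ‖star (v t) ⬝ᵥ (⁅H_B, H_C⁆ *ᵥ v t)‖
      ≤ ‖(WithLp.equiv 2 (n → ℂ)).symm (v t)‖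
        * ‖(WithLp.equiv 2 (n → ℂ)).symm (⁅H_B, H_C⁆ *ᵥ v t)‖ := by
    rw [← inner_piLp_equiv_symm_aux]
    exact norm_inner_le_norm _ _
  have hmul : ‖(WithLp.equiv 2 (n → ℂ)).symm (⁅H_B, H_C⁆ *ᵥ v t)‖
      ≤ ‖⁅H_B, H_C⁆‖ * ‖(WithLp.equiv 2 (n → ℂ)).symm (v t)‖ := by
    simpa using (⁅H_B, H_C⁆).l2_opNorm_mulVec ((WithLp.equiv 2 (n → ℂ)).symm (v t))
  calc ‖star (v t) ⬝ᵥ (⁅H_B, H_C⁆ *ᵥ v t)‖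
      ≤ ‖(WithLp.equiv 2 (n → ℂ)).symm (v t)‖
        * ‖(WithLp.equiv 2 (n → ℂ)).symm (⁅H_B, H_C⁆ *ᵥ v t)‖ := hz
    _ ≤ 1 * (‖⁅H_B, H_C⁆‖ * 1) := by
        rw [hun]
        rw [hun] at hmul
        simpa using hmul
    _ = ‖⁅H_B, H_C⁆‖ := by ring
end

section
/- (Energy extensivity of the MCS pair.) Fix N ≥ 3 and let H_B and H_C be the MCS battery and charger Hamiltonians on N+1 qubits. Then Real.sqrt (N^2 + N) ≤ ‖H_B‖ ≤ 2 * N and Real.sqrt (N^2 + N) ≤ ‖H_C‖ ≤ 2 * N; in particular both Hamiltonians have operator norm of order Θ(N), i.e. they are energy-extensive, even though their commutator norm grows like N². -/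
open scoped Matrix.Norms.L2Operator
open scoped Matrix

/-- The 2×2 matrix `P` acting on site `j` of a chain of `N+1` qubits
(identity elsewhere): `P⁽ʲ⁾ f g = P (f j) (g j) * ∏_{k ≠ j} δ_{f k, g k}`. -/
def siteOp {N : ℕ} (P : Matrix (Fin 2) (Fin 2) ℂ) (j : Fin (N + 1)) :
    Matrix (Fin (N + 1) → Fin 2) (Fin (N + 1) → Fin 2) ℂ :=
  fun f g => P (f j) (g j) * ∏ k ∈ Finset.univ.erase j, (if f k = g k then (1 : ℂ) else 0)

/-- Pauli X. -/
def σx : Matrix (Fin 2) (Fin 2) ℂ := !![0, 1; 1, 0]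
/-- Pauli Y. -/
def σy : Matrix (Fin 2) (Fin 2) ℂ := !![0, -Complex.I; Complex.I, 0]
/-- Pauli Z. -/
def σz : Matrix (Fin 2) (Fin 2) ℂ := !![1, 0; 0, -1]

/-- The peripheral site labelled `i+1` (site `0` is the central spin). -/
def per {N : ℕ} (i : Fin N) : Fin (N + 1) := i.succ

/-- The cyclic successor `i ⊕ 1` among the peripheral sites `{1, …, N}`. -/
def perS {N : ℕ} (i : Fin N) : Fin (N + 1) :=
  ⟨(i.1 + 1) % N + 1, Nat.succ_lt_succ (Nat.mod_lt _ i.pos)⟩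
/-- The cyclic predecessor `i ⊖ 1` among the peripheral sites `{1, …, N}`. -/
def perP {N : ℕ} (i : Fin N) : Fin (N + 1) :=
  ⟨(i.1 + (N - 1)) % N + 1, Nat.succ_lt_succ (Nat.mod_lt _ i.pos)⟩

/-- The modified central-spin (MCS) battery Hamiltonian
`H_B = ∑_{i=1}^N σx⁽⁰⁾ σx⁽ⁱ⁾ + ∑_{i=1}^N σz⁽ⁱ⁾ σz⁽ⁱ⊕¹⁾` on `N+1` qubits (PBC). -/
noncomputable def HB (N : ℕ) :
    Matrix (Fin (N + 1) → Fin 2) (Fin (N + 1) → Fin 2) ℂ :=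
  (∑ i : Fin N, siteOp σx 0 * siteOp σx (per i)) +
  (∑ i : Fin N, siteOp σz (per i) * siteOp σz (perS i))

/-- The modified central-spin (MCS) charger Hamiltonian
`H_C = ∑_{i=1}^N σy⁽⁰⁾ σx⁽ⁱ⁾ + ∑_{i=1}^N σz⁽ⁱ⁾ σz⁽ⁱ⊕¹⁾` on `N+1` qubits (PBC). -/
noncomputable def HC (N : ℕ) :
    Matrix (Fin (N + 1) → Fin 2) (Fin (N + 1) → Fin 2) ℂ :=
  (∑ i : Fin N, siteOp σy 0 * siteOp σx (per i)) +
  (∑ i : Fin N, siteOp σz (per i) * siteOp σz (perS i))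

namespace MCSAux

variable {N : ℕ}

/-! ### Basic algebra of `siteOp` -/

lemma update_inj (f : Fin (N+1) → Fin 2) (j : Fin (N+1)) :
    Function.Injective (Function.update f j) := fun b c h => by
  have := congrFun h j
  simpa using this

lemma siteOp_mulVec (P : Matrix (Fin 2) (Fin 2) ℂ) (j : Fin (N+1))
    (u : (Fin (N+1) → Fin 2) → ℂ) (f : Fin (N+1) → Fin 2) :
    (siteOp P j).mulVec u f = ∑ b : Fin 2, P (f j) b * u (Function.update f j b) := by
  classical
  rw [Matrix.mulVec, dotProduct]
  have himg : ∑ g ∈ Finset.univ.image (Function.update f j), siteOp P j f g * u g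
      = ∑ g : Fin (N+1) → Fin 2, siteOp P j f g * u g := by
    apply Finset.sum_subset (Finset.subset_univ _)
    intro g _ hg
    have hne : ∃ k, k ≠ j ∧ f k ≠ g k := by
      by_contra h
      push_neg at h
      exact hg (Finset.mem_image.2 ⟨g j, Finset.mem_univ _, by
        funext k
        by_cases hk : k = j
        · subst hk; simp
        · simp [Function.update_of_ne hk, h k hk]⟩)
    obtain ⟨k, hk, hfk⟩ := hne
    have hz : (∏ k ∈ Finset.univ.erase j, if f k = g k then (1:ℂ) else 0) = 0 :=
      Finset.prod_eq_zero (Finset.mem_erase.2 ⟨hk, Finset.mem_univ _⟩) (by simp [hfk])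
    simp [siteOp, hz]
  rw [← himg, Finset.sum_image (fun b _ c _ h => update_inj f j h)]
  apply Finset.sum_congr rfl
  intro b _
  have h1 : (∏ k ∈ Finset.univ.erase j,
      if f k = Function.update f j b k then (1:ℂ) else 0) = 1 := by
    apply Finset.prod_eq_one
    intro k hk
    rw [Function.update_of_ne (Finset.mem_erase.1 hk).1]
    simp
  simp [siteOp, h1, Function.update_self]

lemma siteOp_mul (P Q : Matrix (Fin 2) (Fin 2) ℂ) (j : Fin (N+1)) :
    siteOp P j * siteOp Q j = siteOp (P * Q) j := by
  ext f g
  have hrfl : (siteOp P j * siteOp Q j) f g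
      = (siteOp P j).mulVec (fun h => siteOp Q j h g) f := rfl
  rw [hrfl, siteOp_mulVec]
  show _ = (P * Q) (f j) (g j) * _
  rw [Matrix.mul_apply, Finset.sum_mul]
  apply Finset.sum_congr rfl
  intro b _
  show P (f j) b * siteOp Q j (Function.update f j b) g = _
  have h1 : ∀ k ∈ Finset.univ.erase j,
      (if Function.update f j b k = g k then (1:ℂ) else 0) = (if f k = g k then 1 else 0) := by
    intro k hk
    rw [Function.update_of_ne (Finset.mem_erase.1 hk).1]
  simp only [siteOp, Finset.prod_congr rfl h1, Function.update_self]
  ring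

lemma siteOp_one (j : Fin (N+1)) : siteOp (1 : Matrix (Fin 2) (Fin 2) ℂ) j = 1 := by
  ext f g
  by_cases h : f = g
  · subst h
    simp [siteOp, Matrix.one_apply]
  · obtain ⟨k, hk⟩ := Function.ne_iff.1 h
    rw [Matrix.one_apply_ne h]
    by_cases hkj : k = j
    · subst hkj
      show (1 : Matrix (Fin 2) (Fin 2) ℂ) (f k) (g k) * _ = 0
      rw [Matrix.one_apply_ne hk, zero_mul]
    · show _ * _ = (0:ℂ)
      rw [Finset.prod_eq_zero (Finset.mem_erase.2 ⟨hkj, Finset.mem_univ k⟩)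
        (show (if f k = g k then (1:ℂ) else 0) = 0 from if_neg hk), mul_zero]

lemma siteOp_conjTranspose (P : Matrix (Fin 2) (Fin 2) ℂ) (j : Fin (N+1)) :
    (siteOp P j)ᴴ = siteOp Pᴴ j := by
  ext f g
  simp only [Matrix.conjTranspose_apply, siteOp, star_mul']
  congr 1
  · rw [star_prod]
    apply Finset.prod_congr rfl
    intro k _
    rw [apply_ite (star : ℂ → ℂ), star_one, star_zero]
    exact if_congr eq_comm rfl rfl

lemma siteOp_mem_unitary {σ : Matrix (Fin 2) (Fin 2) ℂ}
    (hσ : σ ∈ unitary (Matrix (Fin 2) (Fin 2) ℂ)) (j : Fin (N+1)) :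
    siteOp σ j ∈ unitary (Matrix (Fin (N+1) → Fin 2) (Fin (N+1) → Fin 2) ℂ) := by
  obtain ⟨h1, h2⟩ := hσ
  rw [Matrix.star_eq_conjTranspose] at h1 h2
  constructor
  · rw [Matrix.star_eq_conjTranspose, siteOp_conjTranspose, siteOp_mul, h1, siteOp_one]
  · rw [Matrix.star_eq_conjTranspose, siteOp_conjTranspose, siteOp_mul, h2, siteOp_one]

/-! ### Pauli matrices are unitary -/

lemma σx_mem : σx ∈ unitary (Matrix (Fin 2) (Fin 2) ℂ) := by
  constructor <;>
  · ext i j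
    fin_cases i <;> fin_cases j <;>
      simp [σx, Matrix.mul_apply, Fin.sum_univ_two, Matrix.one_apply,
        Matrix.star_eq_conjTranspose, Matrix.conjTranspose_apply]

lemma σy_mem : σy ∈ unitary (Matrix (Fin 2) (Fin 2) ℂ) := by
  constructor <;>
  · ext i j
    fin_cases i <;> fin_cases j <;>
      simp [σy, Matrix.mul_apply, Fin.sum_univ_two, Matrix.one_apply,
        Matrix.star_eq_conjTranspose, Matrix.conjTranspose_apply, Complex.ext_iff]

lemma σz_mem : σz ∈ unitary (Matrix (Fin 2) (Fin 2) ℂ) := by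
  constructor <;>
  · ext i j
    fin_cases i <;> fin_cases j <;>
      simp [σz, Matrix.mul_apply, Fin.sum_univ_two, Matrix.one_apply,
        Matrix.star_eq_conjTranspose, Matrix.conjTranspose_apply]

/-! ### The sign function and the trial vector -/

/-- The eigenvalue `±1` of `σz` on basis state `b`. -/
def eps : Fin 2 → ℝ := fun b => if b = 0 then 1 else -1

lemma eps_sq (b : Fin 2) : eps b * eps b = 1 := by fin_cases b <;> norm_num [eps]

lemma eps_flip (b : Fin 2) : eps (b + 1) = - eps b := by
  fin_cases b
  · show eps 1 = - eps 0
    norm_num [eps]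
  · show eps 0 = - eps 1
    norm_num [eps]

lemma fin2_add_one_ne (b : Fin 2) : b + 1 ≠ b := by fin_cases b <;> decide

lemma fin2_add_one_add_one (b : Fin 2) : b + 1 + 1 = b := by fin_cases b <;> decide

/-- The trial vector `|+z⟩₀ ⊗ |+x⟩^{⊗N}` (unnormalized). -/
def vv (N : ℕ) : (Fin (N+1) → Fin 2) → ℂ := fun f => if f 0 = 0 then 1 else 0

/-! ### Summation over configurations -/

/-- Splitting a configuration into the central spin and the peripheral spins. -/
def cfgEquiv (M : ℕ) : (Fin 2 × (Fin M → Fin 2)) ≃ (Fin (M+1) → Fin 2) where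
  toFun p := Fin.cons p.1 p.2
  invFun f := (f 0, fun i => f i.succ)
  left_inv p := by
    ext
    · simp
    · simp
  right_inv f := by
    funext k
    cases k using Fin.cases <;> simp

lemma sum_config {M : ℕ} (F : (Fin (M+1) → Fin 2) → ℝ) :
    ∑ f, F f = (∑ g : Fin M → Fin 2, F (Fin.cons 0 g))
      + ∑ g : Fin M → Fin 2, F (Fin.cons 1 g) := by
  rw [← Equiv.sum_comp (cfgEquiv M) F, Fintype.sum_prod_type, Fin.sum_univ_two]
  rfl

lemma card_configs (M : ℕ) : (Finset.univ : Finset (Fin M → Fin 2)).card = 2^M := by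
  simp [Finset.card_univ]

/-! ### The combinatorial second-moment computation -/

lemma offdiag [NeZero N] (hN : 3 ≤ N) (i j : Fin N) (hij : i ≠ j) :
    ∑ g : Fin N → Fin 2, (eps (g i) * eps (g (i+1))) * (eps (g j) * eps (g (j+1))) = 0 := by
  have hv1 : ((1 : Fin N) : ℕ) = 1 := by rw [Fin.val_one', Nat.mod_eq_of_lt (by omega)]
  have h1 : (1 : Fin N) ≠ 0 := by
    intro h; have := congrArg Fin.val h; rw [hv1] at this; simp at this
  have h2 : (1 : Fin N) + 1 ≠ 0 := by
    intro h; have := congrArg Fin.val h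
    rw [Fin.val_add, hv1, Fin.val_zero, Nat.mod_eq_of_lt (by omega)] at this
    omega
  -- pick the site `k` to flip
  obtain ⟨k, hk⟩ : ∃ k : Fin N, (k = i ∧ k ≠ i+1 ∧ k ≠ j ∧ k ≠ j+1)
      ∨ (k ≠ i ∧ k = i+1 ∧ k ≠ j ∧ k ≠ j+1) := by
    by_cases hc : i = j + 1
    · refine ⟨i + 1, Or.inr ⟨?_, rfl, ?_, ?_⟩⟩
      · exact fun h => h1 (add_eq_left.1 h)
      · intro h
        apply h2
        have : j + (1 + 1) = j := by rw [← add_assoc, ← hc, h]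
        exact add_eq_left.1 this
      · exact fun h => hij (add_right_cancel h)
    · exact ⟨i, Or.inl ⟨rfl, fun h => h1 (left_eq_add.1 h), hij, hc⟩⟩
  apply Finset.sum_ninvolution (g := fun g => Function.update g k (g k + 1))
  · -- cancellation
    intro g
    rcases hk with ⟨hk1, hk2, hk3, hk4⟩ | ⟨hk1, hk2, hk3, hk4⟩
    · subst hk1
      simp only [Function.update_self, Function.update_of_ne (Ne.symm hk2),
        Function.update_of_ne (Ne.symm hk3), Function.update_of_ne (Ne.symm hk4), eps_flip]
      ring
    · subst hk2
      simp only [Function.update_self, Function.update_of_ne (Ne.symm hk1),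
        Function.update_of_ne (Ne.symm hk3), Function.update_of_ne (Ne.symm hk4), eps_flip]
      ring
  · intro g _ h
    have := congrFun h k
    rw [Function.update_self] at this
    exact fin2_add_one_ne _ this
  · intro g; exact Finset.mem_univ _
  · intro g
    funext m
    by_cases hm : m = k
    · subst hm; simp [Function.update_self, fin2_add_one_add_one]
    · simp [Function.update_of_ne hm]

lemma sum_T_sq [NeZero N] (hN : 3 ≤ N) :
    ∑ g : Fin N → Fin 2, (∑ i : Fin N, eps (g i) * eps (g (i+1)))^2 = N * 2^N := by
  have expand : ∀ g : Fin N → Fin 2, (∑ i : Fin N, eps (g i) * eps (g (i+1)))^2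
      = ∑ i : Fin N, ∑ j : Fin N,
          (eps (g i) * eps (g (i+1))) * (eps (g j) * eps (g (j+1))) := by
    intro g
    rw [pow_two, Finset.sum_mul_sum]
  rw [Finset.sum_congr rfl fun g _ => expand g, Finset.sum_comm]
  have inner : ∀ i : Fin N, ∑ g : Fin N → Fin 2, ∑ j : Fin N,
      (eps (g i) * eps (g (i+1))) * (eps (g j) * eps (g (j+1))) = 2^N := by
    intro i
    rw [Finset.sum_comm]
    have hterm : ∀ j : Fin N, ∑ g : Fin N → Fin 2,
        (eps (g i) * eps (g (i+1))) * (eps (g j) * eps (g (j+1)))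
        = if j = i then (2:ℝ)^N else 0 := by
      intro j
      by_cases h : j = i
      · subst h
        rw [if_pos rfl]
        have hone : ∀ g : Fin N → Fin 2,
            (eps (g j) * eps (g (j+1))) * (eps (g j) * eps (g (j+1))) = 1 := by
          intro g
          rw [mul_mul_mul_comm, eps_sq, eps_sq, one_mul]
        rw [Finset.sum_congr rfl fun g _ => hone g, Finset.sum_const, card_configs,
          nsmul_eq_mul]
        push_cast
        ring
      · rw [if_neg h, offdiag hN i j (fun hh => h hh.symm)]
    rw [Finset.sum_congr rfl fun j _ => hterm j, Finset.sum_ite_eq' Finset.univ i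
      (fun _ => (2:ℝ)^N), if_pos (Finset.mem_univ i)]
  rw [Finset.sum_congr rfl fun i _ => inner i, Finset.sum_const, Finset.card_univ,
    Fintype.card_fin, nsmul_eq_mul]

/-! ### Action of the Hamiltonian on the trial vector -/

lemma fin2_cases (a : Fin 2) : a = 0 ∨ a = 1 := by
  fin_cases a
  · exact Or.inl rfl
  · exact Or.inr rfl

lemma sx_row (a : Fin 2) : σx a 0 + σx a 1 = 1 := by
  fin_cases a <;> norm_num [σx]

lemma x_per_mulVec (i : Fin N) : (siteOp σx (per i)).mulVec (vv N) = vv N := by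
  funext f
  rw [siteOp_mulVec, Fin.sum_univ_two]
  have h0 : ∀ b, Function.update f (per i) b 0 = f 0 :=
    fun b => Function.update_of_ne (Ne.symm (Fin.succ_ne_zero i)) _ _
  simp only [vv, h0]
  rw [← add_mul, sx_row, one_mul]

lemma center_mulVec (σ : Matrix (Fin 2) (Fin 2) ℂ) :
    (siteOp σ 0).mulVec (vv N) = fun f => σ (f 0) 0 := by
  funext f
  rw [siteOp_mulVec, Fin.sum_univ_two]
  simp only [vv, Function.update_self]
  norm_num

lemma z_mulVec (j : Fin (N+1)) (u : (Fin (N+1) → Fin 2) → ℂ) :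
    (siteOp σz j).mulVec u = fun f => ((eps (f j) : ℝ) : ℂ) * u f := by
  funext f
  rw [siteOp_mulVec, Fin.sum_univ_two]
  rcases fin2_cases (f j) with h | h
  · have hu : Function.update f j 0 = f := by rw [← h]; exact Function.update_eq_self j f
    rw [h, hu]
    norm_num [σz, eps]
  · have hu : Function.update f j 1 = f := by rw [← h]; exact Function.update_eq_self j f
    rw [h, hu]
    norm_num [σz, eps]

lemma sum_mulVec {ι : Type*} (s : Finset ι)
    (M : ι → Matrix (Fin (N+1) → Fin 2) (Fin (N+1) → Fin 2) ℂ)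
    (v : (Fin (N+1) → Fin 2) → ℂ) :
    (∑ i ∈ s, M i).mulVec v = ∑ i ∈ s, (M i).mulVec v := by
  funext f
  rw [Finset.sum_apply]
  simp only [Matrix.mulVec, dotProduct, Matrix.sum_apply, Finset.sum_mul]
  rw [Finset.sum_comm]

/-- The generic MCS Hamiltonian with central coupling `σ`. -/
noncomputable def Hgen (N : ℕ) (σ : Matrix (Fin 2) (Fin 2) ℂ) :
    Matrix (Fin (N + 1) → Fin 2) (Fin (N + 1) → Fin 2) ℂ :=
  (∑ i : Fin N, siteOp σ 0 * siteOp σx (per i)) +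
  (∑ i : Fin N, siteOp σz (per i) * siteOp σz (perS i))

lemma Hgen_mulVec (σ : Matrix (Fin 2) (Fin 2) ℂ) :
    (Hgen N σ).mulVec (vv N) = fun f => (N:ℂ) * σ (f 0) 0
      + ((∑ i : Fin N, eps (f (per i)) * eps (f (perS i)) : ℝ) : ℂ) * vv N f := by
  have hX : ∀ i : Fin N, (siteOp σ 0 * siteOp σx (per i)).mulVec (vv N)
      = fun f => σ (f 0) 0 := by
    intro i; rw [← Matrix.mulVec_mulVec, x_per_mulVec, center_mulVec]
  have hZ : ∀ i : Fin N, (siteOp σz (per i) * siteOp σz (perS i)).mulVec (vv N)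
      = fun f => ((eps (f (per i)) : ℝ):ℂ) * (((eps (f (perS i)) : ℝ):ℂ) * vv N f) := by
    intro i
    rw [← Matrix.mulVec_mulVec, z_mulVec, z_mulVec]
  funext f
  rw [Hgen, Matrix.add_mulVec, sum_mulVec, sum_mulVec, Pi.add_apply,
    Finset.sum_apply, Finset.sum_apply]
  rw [Finset.sum_congr rfl fun i _ => congrFun (hX i) f,
    Finset.sum_congr rfl fun i _ => congrFun (hZ i) f]
  congr 1
  · rw [Finset.sum_const, Finset.card_univ, Fintype.card_fin, nsmul_eq_mul]
  · have hre : ∀ i ∈ (Finset.univ : Finset (Fin N)),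
        ((eps (f (per i)) : ℝ):ℂ) * (((eps (f (perS i)) : ℝ):ℂ) * vv N f)
        = (((eps (f (per i)) * eps (f (perS i)) : ℝ)):ℂ) * vv N f := by
      intro i _
      push_cast
      ring
    rw [Finset.sum_congr rfl hre, ← Finset.sum_mul]
    congr 1
    norm_cast

lemma cons_per (a : Fin 2) (g : Fin N → Fin 2) (i : Fin N) :
    (Fin.cons a g : Fin (N+1) → Fin 2) (per i) = g i := by
  unfold per
  exact Fin.cons_succ (α := fun _ => Fin 2) a g i

lemma perS_eq [NeZero N] (hN : 3 ≤ N) (i : Fin N) : perS i = Fin.succ (i + 1) := by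
  ext
  show (i.1 + 1) % N + 1 = _
  rw [Fin.val_succ, Fin.val_add, Fin.val_one', Nat.mod_eq_of_lt (show 1 < N by omega)]

lemma cons_perS [NeZero N] (hN : 3 ≤ N) (a : Fin 2) (g : Fin N → Fin 2) (i : Fin N) :
    (Fin.cons a g : Fin (N+1) → Fin 2) (perS i) = g (i + 1) := by
  rw [perS_eq hN]
  exact Fin.cons_succ (α := fun _ => Fin 2) a g (i + 1)

/-! ### The main bound for the generic Hamiltonian -/

lemma Hgen_bounds (hN : 3 ≤ N) (σ : Matrix (Fin 2) (Fin 2) ℂ)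
    (hu : σ ∈ unitary (Matrix (Fin 2) (Fin 2) ℂ)) (h00 : σ 0 0 = 0) (h10 : ‖σ 1 0‖ = 1) :
    Real.sqrt ((N:ℝ)^2 + N) ≤ ‖Hgen N σ‖ ∧ ‖Hgen N σ‖ ≤ 2 * N := by
  haveI : NeZero N := ⟨by omega⟩
  constructor
  · -- lower bound via the trial vector
    set x : EuclideanSpace ℂ (Fin (N+1) → Fin 2) :=
      (EuclideanSpace.equiv (Fin (N+1) → Fin 2) ℂ).symm (vv N) with hxdef
    have hineq := Matrix.l2_opNorm_mulVec (Hgen N σ) x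
    have hxn : ‖x‖ = Real.sqrt (2^N) := by
      rw [EuclideanSpace.norm_eq]
      congr 1
      show ∑ f, ‖vv N f‖^2 = (2:ℝ)^N
      rw [sum_config (fun f => ‖vv N f‖^2)]
      have hv0 : ∀ g : Fin N → Fin 2, vv N (Fin.cons 0 g) = 1 := fun g => by simp [vv]
      have hv1 : ∀ g : Fin N → Fin 2, vv N (Fin.cons 1 g) = 0 := fun g => by simp [vv]
      simp only [hv0, hv1, norm_one, norm_zero, one_pow]
      simp [Finset.sum_const, card_configs]
    have hHn : ‖(EuclideanSpace.equiv (Fin (N+1) → Fin 2) ℂ).symm ((Hgen N σ) *ᵥ x)‖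
        = Real.sqrt (((N:ℝ)^2 + N) * 2^N) := by
      rw [EuclideanSpace.norm_eq]
      congr 1
      show ∑ f, ‖((Hgen N σ).mulVec (vv N)) f‖^2 = ((N:ℝ)^2 + N) * 2^N
      rw [Hgen_mulVec, sum_config]
      have hv0 : ∀ g : Fin N → Fin 2, vv N (Fin.cons 0 g) = 1 := fun g => by simp [vv]
      have hv1 : ∀ g : Fin N → Fin 2, vv N (Fin.cons 1 g) = 0 := fun g => by simp [vv]
      simp only [Fin.cons_zero, cons_per, cons_perS hN, hv0, hv1, h00, mul_zero, zero_add,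
        add_zero, mul_one]
      simp only [Complex.norm_real, Real.norm_eq_abs, sq_abs, norm_mul, Complex.norm_natCast,
        h10, mul_one]
      rw [sum_T_sq hN, Finset.sum_const, card_configs, nsmul_eq_mul]
      push_cast
      ring
    rw [hHn, hxn] at hineq
    have h2pos : (0:ℝ) < Real.sqrt (2^N) := Real.sqrt_pos.2 (by positivity)
    have key : Real.sqrt ((N:ℝ)^2 + N) * Real.sqrt (2^N) ≤ ‖Hgen N σ‖ * Real.sqrt (2^N) := by
      rw [← Real.sqrt_mul (by positivity)]
      exact hineq
    exact le_of_mul_le_mul_right key h2pos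
  · -- upper bound by the triangle inequality
    have hterm1 : ∀ i : Fin N, ‖siteOp σ 0 * siteOp σx (per i)‖ = 1 := fun i =>
      CStarRing.norm_of_mem_unitary
        (mul_mem (siteOp_mem_unitary hu 0) (siteOp_mem_unitary σx_mem (per i)))
    have hterm2 : ∀ i : Fin N, ‖siteOp σz (per i) * siteOp σz (perS i)‖ = 1 := fun i =>
      CStarRing.norm_of_mem_unitary
        (mul_mem (siteOp_mem_unitary σz_mem (per i)) (siteOp_mem_unitary σz_mem (perS i)))
    calc ‖Hgen N σ‖ ≤ ‖∑ i : Fin N, siteOp σ 0 * siteOp σx (per i)‖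
        + ‖∑ i : Fin N, siteOp σz (per i) * siteOp σz (perS i)‖ := norm_add_le _ _
      _ ≤ (∑ i : Fin N, ‖siteOp σ 0 * siteOp σx (per i)‖)
        + ∑ i : Fin N, ‖siteOp σz (per i) * siteOp σz (perS i)‖ :=
          add_le_add (norm_sum_le _ _) (norm_sum_le _ _)
      _ = 2 * N := by
          rw [Finset.sum_congr rfl fun i _ => hterm1 i, Finset.sum_congr rfl fun i _ => hterm2 i,
            Finset.sum_const, Finset.card_univ, Fintype.card_fin, nsmul_eq_mul]
          ring

end MCSAux

/-- energy extensivity of the MCS pair. Both the MCS battery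
and charger Hamiltonians on `N+1` qubits have operator norm between
`√(N² + N)` and `2N`, i.e. they are energy-extensive (`Θ(N)`), even though
their commutator norm grows like `N²`. -/
theorem mcs_energy_extensive (N : ℕ) (hN : 3 ≤ N) :
    (Real.sqrt ((N : ℝ) ^ 2 + N) ≤ ‖HB N‖ ∧ ‖HB N‖ ≤ 2 * (N : ℝ)) ∧
    (Real.sqrt ((N : ℝ) ^ 2 + N) ≤ ‖HC N‖ ∧ ‖HC N‖ ≤ 2 * (N : ℝ)) := by
  have hB := MCSAux.Hgen_bounds hN σx MCSAux.σx_mem (by norm_num [σx]) (by norm_num [σx])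
  have hC := MCSAux.Hgen_bounds hN σy MCSAux.σy_mem (by norm_num [σy]) (by simp [σy])
  exact ⟨hB, hC⟩
end
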